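/- Let m be a nonzero integer, Ω > 0, Λ = l(l+1) with l ≥ 2 an integer, and M > 0. Consider the quadratic p(γ) = γ² − c(σ) γ − σ² with c(σ) = (16 m² M Ω² / Λ²) · σ / (σ − (i m / Λ)(Λ − 2) Ω). Then for every σ ∈ ℂ with |Re(σ)| > (|m| Ω / Λ)(Λ − 2 + 8 |m| M Ω / Λ), the polynomial p has one root with strictly positive real part and one root with strictly negative real part. -/

import Mathlib

private lemma half_re' (z : ℂ) : (z / 2).re = z.re / 2 := by
  simp [Complex.div_re, Complex.normSq_apply]

private lemma exists_sqrt' (D : ℂ) :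
    ∃ w : ℂ, w ^ 2 = D ∧ w.re = Real.sqrt ((‖D‖ + D.re) / 2) := by
  have habs := Complex.abs_re_le_norm D
  have h1 : 0 ≤ (‖D‖ + D.re) / 2 := by
    have := neg_abs_le D.re; linarith
  have h2 : 0 ≤ (‖D‖ - D.re) / 2 := by
    have := le_abs_self D.re; linarith
  set x := Real.sqrt ((‖D‖ + D.re) / 2) with hxdef
  set s : ℝ := if 0 ≤ D.im then 1 else -1 with hs
  refine ⟨⟨x, s * Real.sqrt ((‖D‖ - D.re) / 2)⟩, ?_, rfl⟩
  set y' := Real.sqrt ((‖D‖ - D.re) / 2) with hydef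
  have hx2 : x ^ 2 = (‖D‖ + D.re) / 2 := Real.sq_sqrt h1
  have hy2 : y' ^ 2 = (‖D‖ - D.re) / 2 := Real.sq_sqrt h2
  have hs2 : s ^ 2 = 1 := by
    rcases le_or_gt 0 D.im with h | h
    · rw [hs, if_pos h]; norm_num
    · rw [hs, if_neg (not_le.mpr h)]; norm_num
  have hxy : x * y' = |D.im| / 2 := by
    rw [hxdef, hydef, ← Real.sqrt_mul h1]
    have : (‖D‖ + D.re) / 2 * ((‖D‖ - D.re) / 2) = (D.im / 2) ^ 2 := by
      have := Complex.sq_norm D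
      rw [Complex.normSq_apply] at this
      nlinarith [this]
    rw [this, Real.sqrt_sq_eq_abs, abs_div]
    norm_num
  have hsim : s * |D.im| = D.im := by
    rcases le_or_gt 0 D.im with h | h
    · rw [hs, if_pos h, _root_.abs_of_nonneg h, one_mul]
    · rw [hs, if_neg (not_le.mpr h), _root_.abs_of_neg h]; ring
  rw [pow_two]
  apply Complex.ext
  · simp [Complex.mul_re]
    nlinarith [hx2, hy2, hs2]
  · simp [Complex.mul_im]
    have : x * (s * y') + s * y' * x = s * (2 * (x * y')) := by ring
    rw [this, hxy]
    rw [show s * (2 * (|D.im| / 2)) = s * |D.im| by ring, hsim]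

set_option maxHeartbeats 1000000 in
/-- Rouché estimate: for `|Re σ| > (|m|Ω/Λ)(Λ − 2 + 8|m|MΩ/Λ)`, the characteristic quadratic
`γ² − c(σ)γ − σ²` with `c(σ) = (16m²MΩ²/Λ²)·σ/(σ − (im/Λ)(Λ−2)Ω)` has one root with strictly
positive real part and one with strictly negative real part. -/
theorem stmt5 (m l : ℤ) (hm : m ≠ 0) (hl : 2 ≤ l) (Ω M Λ : ℝ)
    (hΛ : Λ = (l : ℝ) * ((l : ℝ) + 1)) (hΩ : 0 < Ω) (hM : 0 < M) (σ : ℂ)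
    (hσ : ((|m| : ℝ) * Ω / Λ) * (Λ - 2 + 8 * (|m| : ℝ) * M * Ω / Λ) < |σ.re|) :
    ∃ γ₁ γ₂ : ℂ,
      (∀ γ : ℂ,
        γ ^ 2 - ((16 * (m : ℂ) ^ 2 * (M : ℂ) * (Ω : ℂ) ^ 2 / (Λ : ℂ) ^ 2) * σ /
            (σ - ((m : ℂ) * Complex.I / (Λ : ℂ)) * ((Λ : ℂ) - 2) * (Ω : ℂ))) * γ - σ ^ 2
          = (γ - γ₁) * (γ - γ₂)) ∧
      γ₁.re < 0 ∧ 0 < γ₂.re := by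
  have hl2 : (2:ℝ) ≤ (l:ℝ) := by exact_mod_cast hl
  have hΛ6 : (6:ℝ) ≤ Λ := by nlinarith
  have hΛ0 : (0:ℝ) < Λ := by linarith
  have hmR : ((m:ℝ)) ≠ 0 := by exact_mod_cast hm
  have hmabs : (0:ℝ) < |(m:ℝ)| := abs_pos.mpr hmR
  set K : ℝ := 16 * (m:ℝ)^2 * M * Ω^2 / Λ^2 with hK
  set β : ℝ := (m:ℝ) * Ω * (Λ - 2) / Λ with hβ
  have hK0 : 0 < K := by rw [hK]; positivity
  set a : ℝ := σ.re with ha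
  set b : ℝ := σ.im with hb
  have hmain : |β| + K / 2 < |a| := by
    have habsβ : |β| = |(m:ℝ)| * Ω * (Λ - 2) / Λ := by
      rw [hβ, abs_div, abs_mul, abs_mul, abs_of_pos hΩ,
        abs_of_pos (show (0:ℝ) < Λ - 2 by linarith), abs_of_pos hΛ0]
    have heq : |(m:ℝ)| * Ω / Λ * (Λ - 2 + 8 * |(m:ℝ)| * M * Ω / Λ) = |β| + K / 2 := by
      rw [habsβ, hK]
      have : |(m:ℝ)| * |(m:ℝ)| = (m:ℝ)^2 := by rw [← _root_.sq_abs (m:ℝ)]; ring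
      field_simp
      linear_combination (16*M*Ω) * this
    rw [heq] at hσ; exact hσ
  have hβ0 : (0:ℝ) ≤ |β| := abs_nonneg β
  have ha0 : (0:ℝ) < |a| := by linarith
  have haa : a ≠ 0 := by intro h; rw [h] at ha0; simp at ha0
  set c : ℂ := (K:ℂ) * σ / (σ - (β:ℂ) * Complex.I) with hc
  have hden : σ - ((m:ℂ) * Complex.I / (Λ:ℂ)) * ((Λ:ℂ) - 2) * (Ω:ℂ) = σ - (β:ℂ) * Complex.I := by
    rw [hβ]; push_cast; ring
  have hnum : (16 * (m:ℂ)^2 * (M:ℂ) * (Ω:ℂ)^2 / (Λ:ℂ)^2) = (K:ℂ) := by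
    rw [hK]; push_cast; ring
  have hceq : (16 * (m:ℂ)^2 * (M:ℂ) * (Ω:ℂ)^2 / (Λ:ℂ)^2) * σ /
      (σ - ((m:ℂ) * Complex.I / (Λ:ℂ)) * ((Λ:ℂ) - 2) * (Ω:ℂ)) = c := by
    rw [hden, hnum, hc]
  have hdne : σ - (β:ℂ) * Complex.I ≠ 0 := by
    intro h
    have : (σ - (β:ℂ) * Complex.I).re = 0 := by rw [h]; simp
    simp [Complex.sub_re, Complex.mul_re] at this
    exact haa (by rw [ha]; exact this)
  have hdre : (σ - (β:ℂ) * Complex.I).re = a := by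
    simp [Complex.sub_re, Complex.mul_re, ha]
  have hT : |a| ≤ ‖σ - (β:ℂ) * Complex.I‖ := by
    rw [← hdre]; exact Complex.abs_re_le_norm _
  have htri : ‖σ‖ ≤ ‖σ - (β:ℂ) * Complex.I‖ + |β| := by
    calc ‖σ‖ = ‖(σ - (β:ℂ) * Complex.I) + (β:ℂ) * Complex.I‖ := by ring_nf
    _ ≤ ‖σ - (β:ℂ) * Complex.I‖ + ‖(β:ℂ) * Complex.I‖ :=
        norm_add_le _ _
    _ = ‖σ - (β:ℂ) * Complex.I‖ + |β| := by simp
  have habsc : ‖c‖ < 2 * |a| := by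
    rw [hc, norm_div, norm_mul, Complex.norm_real, Real.norm_eq_abs, abs_of_pos hK0]
    rw [div_lt_iff₀ (lt_of_lt_of_le ha0 hT)]
    set T := ‖σ - (β:ℂ) * Complex.I‖
    have h1 : K * ‖σ‖ ≤ K * (T + |β|) := by
      apply mul_le_mul_of_nonneg_left htri hK0.le
    nlinarith [hT, hβ0, hK0, ha0]
  set P : ℝ := c.re with hP
  set Q : ℝ := c.im with hQ
  have hnormsq : P^2 + Q^2 < 4 * a^2 := by
    have h1 : (‖c‖)^2 < (2*|a|)^2 := by
      nlinarith [norm_nonneg c, ha0]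
    rw [Complex.sq_norm, Complex.normSq_apply] at h1
    rw [hP, hQ]
    nlinarith [_root_.sq_abs a, h1]
  have hbP : b = 0 → 0 < P := by
    intro hb0
    have hnq : 0 < Complex.normSq (σ - (β:ℂ) * Complex.I) := Complex.normSq_pos.mpr hdne
    have : P = K * a * a / Complex.normSq (σ - (β:ℂ) * Complex.I) := by
      rw [hP, hc, Complex.div_re]
      simp [Complex.mul_re, Complex.mul_im, Complex.sub_re, Complex.sub_im, ← ha, ← hb, hb0]
    rw [this]
    have ha2 : 0 < a * a := mul_self_pos.mpr haa
    have hnum2 : 0 < K * a * a := by rw [show K*a*a = K*(a*a) by ring]; exact mul_pos hK0 ha2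
    exact div_pos hnum2 hnq
  set D : ℂ := c^2 + 4*σ^2 with hD
  have hDe : D = c*c + 4*(σ*σ) := by rw [hD]; ring
  have hDre : D.re = P^2 - Q^2 + 4*a^2 - 4*b^2 := by
    rw [hDe]
    simp only [Complex.add_re, Complex.mul_re, Complex.mul_im, Complex.re_ofNat,
      Complex.im_ofNat, ← ha, ← hb, ← hP, ← hQ]
    ring
  have hDim : D.im = 2*P*Q + 8*a*b := by
    rw [hDe]
    simp only [Complex.add_im, Complex.mul_re, Complex.mul_im, Complex.re_ofNat,
      Complex.im_ofNat, ← ha, ← hb, ← hP, ← hQ]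
    ring
  clear_value D
  clear_value P Q
  clear_value c
  clear_value a b
  clear_value K β
  have hE : 0 < D.im^2 + 4*P^2*D.re - 4*P^4 := by
    rw [hDre, hDim]
    rcases eq_or_ne P 0 with hP0 | hP0
    · have hb0 : b ≠ 0 := fun hb0 => absurd hP0 (ne_of_gt (hbP hb0))
      rw [hP0]
      have h64 : (0:ℝ) < 64*a^2*b^2 := by positivity
      nlinarith [h64]
    · have hP2 : 0 < P^2 := by positivity
      have h4 : 0 < 4*a^2 - P^2 := by nlinarith [sq_nonneg Q]
      have h5 : 0 < 4*a^2 - P^2 - Q^2 := by nlinarith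
      nlinarith [sq_nonneg (b*(4*a^2 - P^2) + P*Q*a),
        mul_pos (mul_pos hP2 (show (0:ℝ) < a^2 by positivity)) h5, h4]
  obtain ⟨w, hw, hwre⟩ := exists_sqrt' D
  have hw' : w^2 = c^2 + 4*σ^2 := hw.trans hD
  have hxnn : 0 ≤ w.re := hwre ▸ Real.sqrt_nonneg _
  have habsD : 0 ≤ ‖D‖ := norm_nonneg D
  have hDnsq : (‖D‖)^2 = D.re^2 + D.im^2 := by
    rw [Complex.sq_norm, Complex.normSq_apply]; ring
  have hkey : 2*P^2 < ‖D‖ + D.re := by nlinarith [hE, habsD, hDnsq]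
  have hx2 : w.re^2 = (‖D‖ + D.re)/2 := by
    rw [hwre]
    exact Real.sq_sqrt (by nlinarith [Complex.abs_re_le_norm D, neg_abs_le D.re])
  have hxP : |P| < w.re := by
    have h1 : P^2 < w.re^2 := by rw [hx2]; nlinarith [hkey]
    by_contra h
    push_neg at h
    have h2 : w.re^2 ≤ |P|^2 := pow_le_pow_left₀ hxnn h 2
    rw [_root_.sq_abs] at h2
    linarith
  refine ⟨(c - w)/2, (c + w)/2, ?_, ?_, ?_⟩
  · intro γ
    rw [hceq]
    linear_combination (1/4 : ℂ) * hw'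
  · rw [half_re', Complex.sub_re, ← hP]
    have := le_abs_self P
    linarith
  · rw [half_re', Complex.add_re, ← hP]
    have := neg_abs_le P
    linarith
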